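/- For x ∈ ℝ fixed and all y > |x| + 2, ln(1 + (x − y)^2) = 2 ln|y| − ∑_{j=1}^∞ C_{j+1}(x)/(j y^j), where the C_j are polynomials with C_j(x) = 2 x^{j−1} + (lower order terms), i.e. deg C_j = j − 1 with leading coefficient 2, and the series converges absolutely. -/

import Mathlib

open Polynomial Complex

/-- The recursive polynomial family: `P k` evaluates to `(x+i)^k + (x-i)^k`. -/
noncomputable def Pc : ℕ → Polynomial ℝ
  | 0 => Polynomial.C 2
  | 1 => Polynomial.C 2 * Polynomial.X
  | (k+2) => Polynomial.C (2:ℝ) * Polynomial.X * Pc (k+1) - (Polynomial.X ^ 2 + 1) * Pc k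

lemma Pc_eval_complex (x : ℝ) : ∀ k : ℕ,
    (((Pc k).eval x : ℝ) : ℂ) = (x + I) ^ k + (x - I) ^ k := by
  intro k
  induction k using Nat.twoStepInduction with
  | zero => norm_num [Pc]
  | one => simp [Pc]; ring
  | more k ih1 ih2 =>
    have h : (Pc (k+2)).eval x = 2 * x * (Pc (k+1)).eval x - (x^2+1) * (Pc k).eval x := by
      simp [Pc]
    rw [h]
    push_cast
    rw [ih1, ih2]
    have h1 : ((x:ℂ) + I)^(k+2) = (2*x) * ((x:ℂ)+I)^(k+1) - ((x:ℂ)^2+1) * ((x:ℂ)+I)^k := by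
      have : ((x:ℂ)+I)^2 = (2*x) * ((x:ℂ)+I) - ((x:ℂ)^2+1) := by
        have := Complex.I_sq
        ring_nf
        rw [Complex.I_sq]
        ring
      calc ((x:ℂ)+I)^(k+2) = ((x:ℂ)+I)^k * ((x:ℂ)+I)^2 := by ring
        _ = ((x:ℂ)+I)^k * ((2*x) * ((x:ℂ)+I) - ((x:ℂ)^2+1)) := by rw [this]
        _ = (2*x) * ((x:ℂ)+I)^(k+1) - ((x:ℂ)^2+1) * ((x:ℂ)+I)^k := by ring
    have h2 : ((x:ℂ) - I)^(k+2) = (2*x) * ((x:ℂ)-I)^(k+1) - ((x:ℂ)^2+1) * ((x:ℂ)-I)^k := by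
      have : ((x:ℂ)-I)^2 = (2*x) * ((x:ℂ)-I) - ((x:ℂ)^2+1) := by
        ring_nf
        rw [Complex.I_sq]
        ring
      calc ((x:ℂ)-I)^(k+2) = ((x:ℂ)-I)^k * ((x:ℂ)-I)^2 := by ring
        _ = ((x:ℂ)-I)^k * ((2*x) * ((x:ℂ)-I) - ((x:ℂ)^2+1)) := by rw [this]
        _ = (2*x) * ((x:ℂ)-I)^(k+1) - ((x:ℂ)^2+1) * ((x:ℂ)-I)^k := by ring
    rw [h1, h2]; ring

lemma Pc_degree : ∀ k : ℕ, (Pc k).degree = (k : WithBot ℕ) ∧ (Pc k).leadingCoeff = 2 := by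
  intro k
  induction k using Nat.twoStepInduction with
  | zero =>
    exact ⟨Polynomial.degree_C (by norm_num), by simp [Pc]⟩
  | one =>
    have hPc1 : Pc 1 = Polynomial.C (2:ℝ) * Polynomial.X := rfl
    constructor
    · rw [hPc1, Polynomial.degree_C_mul (by norm_num), Polynomial.degree_X]; rfl
    · rw [hPc1, Polynomial.leadingCoeff_C_mul_X]
  | more k ih1 ih2 =>
    obtain ⟨hd1, hl1⟩ := ih1
    obtain ⟨hd2, hl2⟩ := ih2
    have hC2 : (Polynomial.C (2:ℝ) * Polynomial.X).degree = 1 := by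
      rw [Polynomial.degree_C_mul (by norm_num), Polynomial.degree_X]
    have hX2 : ((Polynomial.X : Polynomial ℝ)^2 + 1).degree = 2 := by
      compute_degree!
    have hp : (Polynomial.C (2:ℝ) * Polynomial.X * Pc (k+1)).degree = ((k+2 : ℕ) : WithBot ℕ) := by
      rw [Polynomial.degree_mul, hC2, hd2]
      push_cast; ring
    have hq : (((Polynomial.X : Polynomial ℝ)^2 + 1) * Pc k).degree = ((k+2:ℕ) : WithBot ℕ) := by
      rw [Polynomial.degree_mul, hX2, hd1]
      push_cast; ring
    have hpl : (Polynomial.C (2:ℝ) * Polynomial.X * Pc (k+1)).leadingCoeff = 4 := by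
      rw [Polynomial.leadingCoeff_mul, Polynomial.leadingCoeff_C_mul_X, hl2]
      norm_num
    have hql : (((Polynomial.X : Polynomial ℝ)^2 + 1) * Pc k).leadingCoeff = 2 := by
      rw [Polynomial.leadingCoeff_mul, hl1]
      have : ((Polynomial.X : Polynomial ℝ)^2 + 1).leadingCoeff = 1 := by
        have := Polynomial.Monic.leadingCoeff (p := (Polynomial.X : Polynomial ℝ)^2 + 1)
          (by monicity!)
        exact this
      rw [this]; ring
    -- coefficient at k+2
    have hpn : (Polynomial.C (2:ℝ) * Polynomial.X * Pc (k+1)).natDegree = k + 2 :=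
      Polynomial.natDegree_eq_of_degree_eq_some hp
    have hqn : (((Polynomial.X : Polynomial ℝ)^2 + 1) * Pc k).natDegree = k + 2 :=
      Polynomial.natDegree_eq_of_degree_eq_some hq
    have hPcdef : Pc (k+2) = Polynomial.C (2:ℝ) * Polynomial.X * Pc (k+1) - ((Polynomial.X : Polynomial ℝ)^2 + 1) * Pc k := rfl
    have hcoeff : (Pc (k+2)).coeff (k+2) = 2 := by
      rw [hPcdef, Polynomial.coeff_sub]
      have e1 : (Polynomial.C (2:ℝ) * Polynomial.X * Pc (k+1)).coeff (k+2) = 4 := by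
        have := hpl
        rwa [Polynomial.leadingCoeff, hpn] at this
      have e2 : (((Polynomial.X : Polynomial ℝ)^2 + 1) * Pc k).coeff (k+2) = 2 := by
        have := hql
        rwa [Polynomial.leadingCoeff, hqn] at this
      rw [e1, e2]; norm_num
    have hdegle : (Pc (k+2)).degree ≤ ((k+2:ℕ) : WithBot ℕ) := by
      rw [hPcdef]
      exact (Polynomial.degree_sub_le _ _).trans (by rw [hp, hq]; simp)
    have hdeg : (Pc (k+2)).degree = ((k+2:ℕ) : WithBot ℕ) :=
      Polynomial.degree_eq_of_le_of_coeff_ne_zero hdegle (by rw [hcoeff]; norm_num)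
    refine ⟨hdeg, ?_⟩
    rw [Polynomial.leadingCoeff, Polynomial.natDegree_eq_of_degree_eq_some hdeg, hcoeff]

theorem log_expansion :
    ∃ Cp : ℕ → Polynomial ℝ,
      (∀ j : ℕ, 2 ≤ j →
          (Cp j).degree = ((j - 1 : ℕ) : WithBot ℕ) ∧ (Cp j).leadingCoeff = 2) ∧
      ∀ x y : ℝ, |x| + 2 < y →
        Summable (fun j : ℕ =>
          |(Cp (j + 2)).eval x / (((j : ℝ) + 1) * y ^ (j + 1))|) ∧
        Real.log (1 + (x - y) ^ 2) =
          2 * Real.log |y| -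
            ∑' j : ℕ, (Cp (j + 2)).eval x / (((j : ℝ) + 1) * y ^ (j + 1)) := by
  refine ⟨fun j => Pc (j - 1), fun j _ => Pc_degree (j - 1), ?_⟩
  intro x y hxy
  have hy0 : 0 < y := by have := abs_nonneg x; linarith
  have hyC : (y : ℂ) ≠ 0 := by exact_mod_cast hy0.ne'
  set z₁ : ℂ := ((x : ℂ) + I) / y with hz₁
  set z₂ : ℂ := ((x : ℂ) - I) / y with hz₂
  have hn1sq : ‖(x:ℂ) + I‖ ^ 2 = x ^ 2 + 1 := by
    rw [Complex.sq_norm, Complex.normSq_apply]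
    simp
    ring
  have hn2sq : ‖(x:ℂ) - I‖ ^ 2 = x ^ 2 + 1 := by
    rw [Complex.sq_norm, Complex.normSq_apply]
    simp
    ring
  have hn1 : ‖(x:ℂ) + I‖ ≤ |x| + 1 := by
    nlinarith [norm_nonneg ((x:ℂ) + I), abs_nonneg x, _root_.sq_abs x]
  have hn2 : ‖(x:ℂ) - I‖ ≤ |x| + 1 := by
    nlinarith [norm_nonneg ((x:ℂ) - I), abs_nonneg x, _root_.sq_abs x]
  have hyn : ‖(y:ℂ)‖ = y := by
    rw [Complex.norm_real, Real.norm_eq_abs, abs_of_pos hy0]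
  have hz1n : ‖z₁‖ < 1 := by
    rw [hz₁, norm_div, hyn, div_lt_one hy0]
    linarith
  have hz2n : ‖z₂‖ < 1 := by
    rw [hz₂, norm_div, hyn, div_lt_one hy0]
    linarith
  -- the full series
  set f : ℕ → ℝ := fun n => (Pc n).eval x / (n * y ^ n) with hf
  have hterm : ∀ n : ℕ, z₁ ^ n / n + z₂ ^ n / n = ((f n : ℝ) : ℂ) := by
    intro n
    have hps : z₁ ^ n + z₂ ^ n = (((Pc n).eval x : ℝ) : ℂ) / (y:ℂ) ^ n := by
      rw [Pc_eval_complex x n, hz₁, hz₂, div_pow, div_pow, ← add_div]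
    have : z₁ ^ n / n + z₂ ^ n / n = (z₁ ^ n + z₂ ^ n) / n := by ring
    rw [this, hps, div_div, hf]
    push_cast
    ring
  have hs := ((Complex.hasSum_taylorSeries_neg_log hz1n).add
    (Complex.hasSum_taylorSeries_neg_log hz2n))
  have hre := Complex.reCLM.hasSum hs
  simp only [hterm, Complex.reCLM_apply, Complex.ofReal_re] at hre
  -- identify the sum value
  have hconj : (starRingEnd ℂ) (1 - z₁) = 1 - z₂ := by
    rw [map_sub, map_one, hz₁, hz₂, map_div₀, map_add, Complex.conj_ofReal,
      Complex.conj_ofReal, Complex.conj_I]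
    ring_nf
  have habs_eq : ‖1 - z₂‖ = ‖1 - z₁‖ := by
    rw [← hconj, Complex.norm_conj]
  have h1z : (1 : ℂ) - z₁ = (((y - x : ℝ) : ℂ) - I) / y := by
    rw [hz₁]
    field_simp
    push_cast
    ring
  have habs_sq : ‖1 - z₁‖ ^ 2 = (1 + (x - y) ^ 2) / y ^ 2 := by
    rw [h1z, norm_div, div_pow, Complex.sq_norm, Complex.normSq_apply]
    have : ‖(y:ℂ)‖ ^ 2 = y ^ 2 := by
      rw [hyn]
    rw [this]
    simp
    ring
  have habs_pos : 0 < ‖1 - z₁‖ := by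
    have hRpos : (0:ℝ) < (1 + (x - y) ^ 2) / y ^ 2 := by positivity
    nlinarith [norm_nonneg (1 - z₁), habs_sq, hRpos]
  have hval : (-Complex.log (1 - z₁) + -Complex.log (1 - z₂)).re =
      2 * Real.log |y| - Real.log (1 + (x - y) ^ 2) := by
    rw [Complex.add_re, Complex.neg_re, Complex.neg_re, Complex.log_re, Complex.log_re,
      habs_eq]
    have h2log : Real.log ‖1 - z₁‖ + Real.log ‖1 - z₁‖
        = Real.log (‖1 - z₁‖ ^ 2) := by
      rw [Real.log_pow]
      push_cast
      ring
    have hpos : (0:ℝ) < 1 + (x - y) ^ 2 := by positivity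
    rw [← neg_add, h2log, habs_sq, Real.log_div hpos.ne' (by positivity),
      Real.log_pow, Real.log_abs]
    push_cast
    ring
  rw [hval] at hre
  have hf0 : f 0 = 0 := by simp [hf]
  have hshift : HasSum (fun j : ℕ => f (j + 1))
      (2 * Real.log |y| - Real.log (1 + (x - y) ^ 2)) := by
    refine (hasSum_nat_add_iff 1).mpr ?_
    simpa [hf0] using hre
  have hfeq : ∀ j : ℕ, f (j + 1) = (Pc (j + 1)).eval x / (((j : ℝ) + 1) * y ^ (j + 1)) := by
    intro j
    rw [hf]
    push_cast
    ring_nf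
  constructor
  · -- summability
    have hbound : ∀ j : ℕ, |(Pc (j + 2 - 1)).eval x / (((j : ℝ) + 1) * y ^ (j + 1))|
        ≤ 2 * ‖z₁‖ ^ (j + 1) := by
      intro j
      have hev : |(Pc (j + 1)).eval x| ≤ 2 * ‖(x:ℂ) + I‖ ^ (j + 1) := by
        have : |(Pc (j+1)).eval x| = ‖(((Pc (j+1)).eval x : ℝ) : ℂ)‖ := by
          rw [Complex.norm_real, Real.norm_eq_abs]
        rw [this, Pc_eval_complex x (j+1)]
        calc ‖((x:ℂ)+I)^(j+1) + ((x:ℂ)-I)^(j+1)‖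
            ≤ ‖((x:ℂ)+I)^(j+1)‖ + ‖((x:ℂ)-I)^(j+1)‖ :=
              norm_add_le _ _
          _ = ‖(x:ℂ)+I‖^(j+1) + ‖(x:ℂ)-I‖^(j+1) := by
              rw [norm_pow, norm_pow]
          _ ≤ 2 * ‖(x:ℂ)+I‖^(j+1) := by
              have : ‖(x:ℂ)-I‖ = ‖(x:ℂ)+I‖ := by
                nlinarith [norm_nonneg ((x:ℂ)-I), norm_nonneg ((x:ℂ)+I)]
              rw [this]; ring_nf; rfl
      have hden : (0:ℝ) < ((j:ℝ)+1) * y ^ (j+1) := by positivity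
      rw [abs_div, abs_of_pos hden]
      rw [div_le_iff₀ hden]
      have hz1pow : ‖z₁‖ ^ (j+1) = ‖(x:ℂ)+I‖^(j+1) / y ^ (j+1) := by
        rw [hz₁, norm_div, hyn, div_pow]
      rw [hz1pow]
      have hyp : (0:ℝ) < y ^ (j+1) := by positivity
      have hj1 : (1:ℝ) ≤ (j:ℝ) + 1 := by
        have : (0:ℝ) ≤ (j:ℝ) := Nat.cast_nonneg j
        linarith
      calc |(Pc (j + 2 - 1)).eval x| = |(Pc (j+1)).eval x| := by norm_num
        _ ≤ 2 * ‖(x:ℂ)+I‖^(j+1) := hev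
        _ = 2 * (‖(x:ℂ)+I‖^(j+1) / y^(j+1)) * y^(j+1) * 1 := by field_simp
        _ ≤ 2 * (‖(x:ℂ)+I‖^(j+1) / y^(j+1)) * y^(j+1) * ((j:ℝ)+1) := by
            have : (0:ℝ) ≤ 2 * (‖(x:ℂ)+I‖^(j+1) / y^(j+1)) * y^(j+1) := by positivity
            nlinarith
        _ = 2 * (‖(x:ℂ)+I‖^(j+1) / y^(j+1)) * (((j:ℝ)+1) * y^(j+1)) := by ring
    refine Summable.of_nonneg_of_le (fun j => abs_nonneg _) hbound ?_
    have : Summable (fun j : ℕ => (2 * ‖z₁‖) * ‖z₁‖ ^ j) :=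
      (summable_geometric_of_lt_one (norm_nonneg _) hz1n).mul_left _
    refine this.congr fun j => ?_
    rw [pow_succ']
    ring
  · -- the sum formula
    have htsum : ∑' j : ℕ, (Pc (j + 2 - 1)).eval x / (((j : ℝ) + 1) * y ^ (j + 1))
        = 2 * Real.log |y| - Real.log (1 + (x - y) ^ 2) := by
      rw [← hshift.tsum_eq]
      congr 1
      funext j
      rw [hfeq j]
      norm_num
    rw [htsum]
    ring
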